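/- Along any solution of the dynamical system da/dt = Bc, dB/dt = a c^T, dc/dt = B^T a, one has d/dt ‖a'(t)‖² − d/dt ‖c'(t)‖² = 2E(t)(‖c(t)‖² − ‖a(t)‖²), where E = a^T B c. Moreover ‖c(t)‖² − ‖a(t)‖² is constant in time, so ‖a'(t)‖² − ‖c'(t)‖² = ‖a'(0)‖² − ‖c'(0)‖² + (‖a(t)‖² − ‖a(0)‖²)(‖c(0)‖² − ‖a(0)‖²). -/

import Mathlib

/-- Along any solution, `d/dt ‖a'‖² − d/dt ‖c'‖² = 2E(‖c‖² − ‖a‖²)`; moreover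
`‖c‖² − ‖a‖²` is constant, so
`‖a'(t)‖² − ‖c'(t)‖² = ‖a'(0)‖² − ‖c'(0)‖² + (‖a(t)‖² − ‖a(0)‖²)(‖c(0)‖² − ‖a(0)‖²)`. -/
theorem stmt_7 (m : ℕ) (a c : ℝ → Fin m → ℝ) (B : ℝ → Fin m → Fin m → ℝ)
    (ha : ∀ t i, HasDerivAt (fun s => a s i) (∑ j, B t i j * c t j) t)
    (hB : ∀ t i j, HasDerivAt (fun s => B s i j) (a t i * c t j) t)
    (hc : ∀ t j, HasDerivAt (fun s => c s j) (∑ i, B t i j * a t i) t)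
    (E : ℝ → ℝ) (hE : ∀ t, E t = ∑ i, ∑ j, a t i * B t i j * c t j) :
    (∀ t : ℝ,
      HasDerivAt
        (fun s => (∑ i, (∑ j, B s i j * c s j) ^ 2) - ∑ j, (∑ i, B s i j * a s i) ^ 2)
        (2 * E t * ((∑ j, c t j ^ 2) - ∑ i, a t i ^ 2)) t) ∧
    (∀ t s : ℝ, (∑ j, c t j ^ 2) - (∑ i, a t i ^ 2)
        = (∑ j, c s j ^ 2) - (∑ i, a s i ^ 2)) ∧
    (∀ t : ℝ,
      (∑ i, (∑ j, B t i j * c t j) ^ 2) - (∑ j, (∑ i, B t i j * a t i) ^ 2)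
        = (∑ i, (∑ j, B 0 i j * c 0 j) ^ 2) - (∑ j, (∑ i, B 0 i j * a 0 i) ^ 2)
          + ((∑ i, a t i ^ 2) - (∑ i, a 0 i ^ 2))
            * ((∑ j, c 0 j ^ 2) - (∑ i, a 0 i ^ 2))) := by
  have da' : ∀ t i, HasDerivAt (fun s => ∑ j, B s i j * c s j)
      (∑ j, (a t i * c t j * c t j + B t i j * ∑ k, B t k j * a t k)) t :=
    fun t i => HasDerivAt.fun_sum fun j _ => (hB t i j).fun_mul (hc t j)
  have dc' : ∀ t j, HasDerivAt (fun s => ∑ i, B s i j * a s i)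
      (∑ i, (a t i * c t j * a t i + B t i j * ∑ k, B t i k * c t k)) t :=
    fun t j => HasDerivAt.fun_sum fun i _ => (hB t i j).fun_mul (ha t i)
  have dG : ∀ t, HasDerivAt (fun s => ∑ i, a s i ^ 2) (2 * E t) t := by
    intro t
    have h := HasDerivAt.fun_sum (fun i (_ : i ∈ Finset.univ) => ((ha t i).fun_pow 2))
    refine h.congr_deriv (Eq.symm ?_)
    rw [hE, Finset.mul_sum]
    refine Finset.sum_congr rfl fun i _ => ?_
    rw [Finset.mul_sum, Finset.mul_sum]
    refine Finset.sum_congr rfl fun j _ => ?_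
    push_cast
    ring
  have dH : ∀ t, HasDerivAt (fun s => ∑ j, c s j ^ 2) (2 * E t) t := by
    intro t
    have h := HasDerivAt.fun_sum (fun j (_ : j ∈ Finset.univ) => ((hc t j).fun_pow 2))
    refine h.congr_deriv (Eq.symm ?_)
    rw [hE, Finset.sum_comm, Finset.mul_sum]
    refine Finset.sum_congr rfl fun j _ => ?_
    rw [Finset.mul_sum, Finset.mul_sum]
    refine Finset.sum_congr rfl fun i _ => ?_
    push_cast
    ring
  -- Part 1
  have dF : ∀ t, HasDerivAt
      (fun s => (∑ i, (∑ j, B s i j * c s j) ^ 2) - ∑ j, (∑ i, B s i j * a s i) ^ 2)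
      (2 * E t * ((∑ j, c t j ^ 2) - ∑ i, a t i ^ 2)) t := by
    intro t
    have h1 := HasDerivAt.fun_sum (fun i (_ : i ∈ Finset.univ) => ((da' t i).fun_pow 2))
    have h2 := HasDerivAt.fun_sum (fun j (_ : j ∈ Finset.univ) => ((dc' t j).fun_pow 2))
    have h := h1.fun_sub h2
    refine h.congr_deriv (Eq.symm ?_)
    push_cast
    simp only [pow_one]
    have hA1 : ∑ i, ((2:ℝ) * (∑ j, B t i j * c t j) *
          (∑ j, (a t i * c t j * c t j + B t i j * ∑ k, B t k j * a t k)))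
        = 2 * E t * (∑ j, c t j ^ 2)
          + ∑ i, (2 * ∑ j, (∑ k, B t i k * c t k) * (B t i j * ∑ k, B t k j * a t k)) := by
      rw [hE, mul_assoc, Finset.sum_mul, Finset.mul_sum, ← Finset.sum_add_distrib]
      refine Finset.sum_congr rfl fun i _ => ?_
      rw [Finset.sum_add_distrib, mul_add]
      congr 1
      · rw [show (∑ j, a t i * c t j * c t j) = a t i * ∑ j, c t j ^ 2 by
            rw [Finset.mul_sum]; exact Finset.sum_congr rfl fun j _ => by ring,
          show (∑ j, a t i * B t i j * c t j) = a t i * ∑ j, B t i j * c t j by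
            rw [Finset.mul_sum]; exact Finset.sum_congr rfl fun j _ => by ring]
        ring
      · exact (Finset.mul_sum _ _ _).trans
          ((Finset.sum_congr rfl fun j _ => by ring).trans (Finset.mul_sum _ _ _).symm)
    have hA2 : ∑ j, ((2:ℝ) * (∑ i, B t i j * a t i) *
          (∑ i, (a t i * c t j * a t i + B t i j * ∑ k, B t i k * c t k)))
        = 2 * E t * (∑ i, a t i ^ 2)
          + ∑ j, (2 * ∑ i, (∑ k, B t k j * a t k) * (B t i j * ∑ k, B t i k * c t k)) := by
      rw [hE, Finset.sum_comm, mul_assoc, Finset.sum_mul, Finset.mul_sum,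
        ← Finset.sum_add_distrib]
      refine Finset.sum_congr rfl fun j _ => ?_
      rw [Finset.sum_add_distrib, mul_add]
      congr 1
      · rw [show (∑ i, a t i * c t j * a t i) = c t j * ∑ i, a t i ^ 2 by
            rw [Finset.mul_sum]; exact Finset.sum_congr rfl fun i _ => by ring,
          show (∑ i, a t i * B t i j * c t j) = c t j * ∑ i, B t i j * a t i by
            rw [Finset.mul_sum]; exact Finset.sum_congr rfl fun i _ => by ring]
        ring
      · exact (Finset.mul_sum _ _ _).trans
          ((Finset.sum_congr rfl fun i _ => by ring).trans (Finset.mul_sum _ _ _).symm)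
    have hXY : ∑ i, ((2:ℝ) * ∑ j, (∑ k, B t i k * c t k) * (B t i j * ∑ k, B t k j * a t k))
        = ∑ j, ((2:ℝ) * ∑ i, (∑ k, B t k j * a t k) * (B t i j * ∑ k, B t i k * c t k)) := by
      rw [show (∑ i, ((2:ℝ) * ∑ j, (∑ k, B t i k * c t k) * (B t i j * ∑ k, B t k j * a t k)))
            = ∑ i, ∑ j, (2:ℝ) * ((∑ k, B t i k * c t k) * (B t i j * ∑ k, B t k j * a t k))
          from Finset.sum_congr rfl fun i _ => Finset.mul_sum _ _ _,
        show (∑ j, ((2:ℝ) * ∑ i, (∑ k, B t k j * a t k) * (B t i j * ∑ k, B t i k * c t k)))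
            = ∑ j, ∑ i, (2:ℝ) * ((∑ k, B t k j * a t k) * (B t i j * ∑ k, B t i k * c t k))
          from Finset.sum_congr rfl fun j _ => Finset.mul_sum _ _ _,
        Finset.sum_comm]
      exact Finset.sum_congr rfl fun j _ => Finset.sum_congr rfl fun i _ => by ring
    rw [hA1, hA2] at *
    linarith [hXY]
  -- Part 2
  have dpsi : ∀ t, HasDerivAt (fun s => (∑ j, c s j ^ 2) - ∑ i, a s i ^ 2) 0 t := by
    intro t
    simpa using (dH t).fun_sub (dG t)
  have h2 : ∀ t s : ℝ, (∑ j, c t j ^ 2) - (∑ i, a t i ^ 2)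
      = (∑ j, c s j ^ 2) - (∑ i, a s i ^ 2) :=
    fun t s => is_const_of_deriv_eq_zero
      (fun x => (dpsi x).differentiableAt) (fun x => (dpsi x).deriv) t s
  refine ⟨dF, h2, ?_⟩
  -- Part 3
  intro t
  set K : ℝ := (∑ j, c 0 j ^ 2) - ∑ i, a 0 i ^ 2 with hK
  have dphi : ∀ u : ℝ, HasDerivAt
      (fun s => ((∑ i, (∑ j, B s i j * c s j) ^ 2) - ∑ j, (∑ i, B s i j * a s i) ^ 2)
        - K * ∑ i, a s i ^ 2) 0 u := by
    intro u
    have h := (dF u).fun_sub ((dG u).const_mul K)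
    refine h.congr_deriv (Eq.symm ?_)
    rw [h2 u 0]
    ring
  have hc3 := is_const_of_deriv_eq_zero
    (fun x => (dphi x).differentiableAt) (fun x => (dphi x).deriv) t 0
  linarith [hc3]
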